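/- Let C > 0 and let μ be a Borel probability measure on Ω × Θ_C such that ∫_{Ω × Θ_C} θ(x) dμ(ω, θ) = 0 for every x ∈ ℝ^d. Let r : Ω × Θ_C → ℝ^d be a bounded Borel measurable map such that for μ-almost every (ω, θ) and every v ∈ ℝ^d, lim_{t→+∞} θ(tv)/t = ⟨r(ω, θ), v⟩. Then ∫_{Ω × Θ_C} r dμ = 0. -/

import Mathlib

open MeasureTheory Filter Topology
open scoped RealInnerProductSpace

noncomputable section

/-- Euclidean space `ℝ^d`. -/
abbrev EucSp (d : ℕ) := EuclideanSpace ℝ (Fin d)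

/-- `Θ_C`: functions `θ : ℝ^d → ℝ` with `θ 0 = 0` that are Lipschitz with constant `C`. -/
def Theta (d : ℕ) (C : ℝ) : Type :=
  {θ : EucSp d → ℝ // θ 0 = 0 ∧ ∀ x y, |θ x - θ y| ≤ C * ‖x - y‖}

/-- The distance `d(θ₁, θ₂) = sup_x |θ₁ x - θ₂ x| / (1 + |x|²)`. -/
noncomputable def thetaDist {d : ℕ} {C : ℝ} (θ₁ θ₂ : Theta d C) : ℝ :=
  ⨆ x : EucSp d, |θ₁.1 x - θ₂.1 x| / (1 + ‖x‖ ^ 2)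

theorem thetaDist_term_le {d : ℕ} {C : ℝ} (θ₁ θ₂ : Theta d C) (x : EucSp d) :
    |θ₁.1 x - θ₂.1 x| / (1 + ‖x‖ ^ 2) ≤ |C| := by
  have hx : (0:ℝ) < 1 + ‖x‖ ^ 2 := by positivity
  have a := θ₁.2.2 x 0
  have b := θ₂.2.2 x 0
  rw [θ₁.2.1] at a
  rw [θ₂.2.1] at b
  simp only [sub_zero] at a b
  have h1 : |θ₁.1 x - θ₂.1 x| ≤ |θ₁.1 x| + |θ₂.1 x| := abs_sub _ _
  rw [div_le_iff₀ hx]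
  nlinarith [abs_nonneg C, norm_nonneg x, sq_nonneg (‖x‖ - 1), le_abs_self C,
    mul_nonneg (abs_nonneg C) (sq_nonneg (‖x‖ - 1)),
    mul_nonneg (sub_nonneg.mpr (le_abs_self C)) (norm_nonneg x)]

theorem thetaDist_bddAbove {d : ℕ} {C : ℝ} (θ₁ θ₂ : Theta d C) :
    BddAbove (Set.range fun x : EucSp d => |θ₁.1 x - θ₂.1 x| / (1 + ‖x‖ ^ 2)) := by
  refine ⟨|C|, ?_⟩
  rintro y ⟨x, rfl⟩
  exact thetaDist_term_le θ₁ θ₂ x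

/-- `(Θ_C, thetaDist)` is a metric space. -/
noncomputable instance {d : ℕ} {C : ℝ} : MetricSpace (Theta d C) where
  dist := thetaDist
  dist_self θ := by simp [thetaDist]
  dist_comm θ₁ θ₂ := by
    unfold thetaDist
    exact iSup_congr fun x => by rw [abs_sub_comm]
  dist_triangle θ₁ θ₂ θ₃ := by
    refine ciSup_le fun x => ?_
    have h : |θ₁.1 x - θ₃.1 x| / (1 + ‖x‖ ^ 2) ≤
        |θ₁.1 x - θ₂.1 x| / (1 + ‖x‖ ^ 2) + |θ₂.1 x - θ₃.1 x| / (1 + ‖x‖ ^ 2) := by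
      rw [← add_div]
      gcongr
      exact abs_sub_le _ _ _
    refine h.trans (add_le_add ?_ ?_)
    · exact le_ciSup (thetaDist_bddAbove θ₁ θ₂) x
    · exact le_ciSup (thetaDist_bddAbove θ₂ θ₃) x
  eq_of_dist_eq_zero {θ₁ θ₂} h := by
    have h' : thetaDist θ₁ θ₂ = 0 := h
    apply Subtype.ext
    funext x
    have hx : (0:ℝ) < 1 + ‖x‖ ^ 2 := by positivity
    have hle : |θ₁.1 x - θ₂.1 x| / (1 + ‖x‖ ^ 2) ≤ thetaDist θ₁ θ₂ :=
      le_ciSup (thetaDist_bddAbove θ₁ θ₂) x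
    rw [h'] at hle
    have h0 : 0 ≤ |θ₁.1 x - θ₂.1 x| / (1 + ‖x‖ ^ 2) := by positivity
    have heq : |θ₁.1 x - θ₂.1 x| / (1 + ‖x‖ ^ 2) = 0 := le_antisymm hle h0
    rcases div_eq_zero_iff.mp heq with hnum | hden
    · exact sub_eq_zero.mp (abs_eq_zero.mp hnum)
    · exact absurd hden hx.ne'

instance {d : ℕ} {C : ℝ} : MeasurableSpace (Theta d C) := borel _
instance {d : ℕ} {C : ℝ} : BorelSpace (Theta d C) := ⟨rfl⟩

theorem eval_continuous {d : ℕ} {C : ℝ} (x : EucSp d) :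
    Continuous (fun θ : Theta d C => θ.1 x) := by
  have hx : (0:ℝ) < 1 + ‖x‖ ^ 2 := by positivity
  refine (LipschitzWith.of_dist_le_mul (K := (1 + ‖x‖ ^ 2).toNNReal) ?_).continuous
  intro θ₁ θ₂
  have hK : ((1 + ‖x‖ ^ 2).toNNReal : ℝ) = 1 + ‖x‖ ^ 2 := Real.coe_toNNReal _ hx.le
  rw [Real.dist_eq, hK]
  have h1 : |θ₁.1 x - θ₂.1 x| / (1 + ‖x‖ ^ 2) ≤ thetaDist θ₁ θ₂ :=
    le_ciSup (thetaDist_bddAbove θ₁ θ₂) x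
  have : dist θ₁ θ₂ = thetaDist θ₁ θ₂ := rfl
  rw [this]
  calc |θ₁.1 x - θ₂.1 x| = (|θ₁.1 x - θ₂.1 x| / (1 + ‖x‖ ^ 2)) * (1 + ‖x‖ ^ 2) := by
        field_simp
    _ ≤ thetaDist θ₁ θ₂ * (1 + ‖x‖ ^ 2) := by gcongr
    _ = (1 + ‖x‖ ^ 2) * thetaDist θ₁ θ₂ := mul_comm _ _

/-- If `∫ θ(x) dμ = 0` for every `x` and `θ(tv)/t → ⟨r(ω,θ), v⟩` `μ`-a.s. for a bounded
measurable `r`, then `∫ r dμ = 0`. -/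
theorem stmt13 {d : ℕ} {Ω : Type*} [TopologicalSpace Ω] [PolishSpace Ω]
    [MeasurableSpace Ω] [BorelSpace Ω]
    (ℙ : Measure Ω) [IsProbabilityMeasure ℙ]
    (C : ℝ) (hC : 0 < C)
    (μ : Measure (Ω × Theta d C)) [IsProbabilityMeasure μ]
    (hmean : ∀ x : EucSp d, ∫ p : Ω × Theta d C, (p.2).1 x ∂μ = 0)
    (r : Ω × Theta d C → EucSp d) (hrmeas : Measurable r)
    (hrbdd : ∃ B : ℝ, ∀ p, ‖r p‖ ≤ B)
    (hr : ∀ᵐ p ∂μ, ∀ v : EucSp d,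
      Tendsto (fun t : ℝ => (p.2).1 (t • v) / t) atTop (𝓝 ⟪r p, v⟫)) :
    ∫ p, r p ∂μ = 0 := by
  obtain ⟨B, hB⟩ := hrbdd
  have hrint : Integrable r μ :=
    ⟨hrmeas.aestronglyMeasurable,
      HasFiniteIntegral.of_bounded (C := B) (Filter.Eventually.of_forall hB)⟩
  suffices h : ∀ v : EucSp d, ⟪v, ∫ p, r p ∂μ⟫ = 0 by
    exact inner_self_eq_zero.mp (h _)
  intro v
  have key : ∫ p, ⟪v, r p⟫ ∂μ = 0 := by
    set f : ℕ → Ω × Theta d C → ℝ := fun n p => (p.2).1 ((n : ℝ) • v) / n with hf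
    have hfmeas : ∀ n, AEStronglyMeasurable (f n) μ := fun n =>
      (((eval_continuous ((n : ℝ) • v)).measurable.comp measurable_snd).div_const
        _).aestronglyMeasurable
    have hbound : ∀ n, ∀ᵐ p ∂μ, ‖f n p‖ ≤ C * ‖v‖ := by
      intro n
      refine Filter.Eventually.of_forall fun p => ?_
      rcases Nat.eq_zero_or_pos n with hn | hn
      · subst hn
        simp only [hf, Nat.cast_zero, zero_smul, (p.2).2.1, Real.norm_eq_abs]
        simp [div_zero]
        positivity
      · have hn' : (0:ℝ) < n := by exact_mod_cast hn
        have hlip := (p.2).2.2 ((n : ℝ) • v) 0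
        rw [(p.2).2.1, sub_zero, sub_zero] at hlip
        have : ‖((n:ℝ) • v)‖ = n * ‖v‖ := by
          rw [norm_smul, Real.norm_eq_abs, abs_of_pos hn']
        rw [this] at hlip
        have : ‖f n p‖ = |(p.2).1 ((n : ℝ) • v)| / n := by
          rw [hf]; simp only [Real.norm_eq_abs, abs_div, abs_of_pos hn']
        rw [this, div_le_iff₀ hn']
        calc |(p.2).1 ((n : ℝ) • v)| ≤ C * (n * ‖v‖) := hlip
          _ = C * ‖v‖ * n := by ring
    have hlim : ∀ᵐ p ∂μ, Tendsto (fun n : ℕ => f n p) atTop (𝓝 ⟪v, r p⟫) := by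
      filter_upwards [hr] with p hp
      rw [real_inner_comm]
      exact (hp v).comp tendsto_natCast_atTop_atTop
    have hT := tendsto_integral_of_dominated_convergence (bound := fun _ => C * ‖v‖)
      hfmeas (integrable_const _) hbound hlim
    have hzero : ∀ n : ℕ, ∫ p, f n p ∂μ = 0 := by
      intro n
      simp only [hf, integral_div, hmean ((n : ℝ) • v), zero_div]
    have : Tendsto (fun _ : ℕ => (0:ℝ)) atTop (𝓝 (∫ p, ⟪v, r p⟫ ∂μ)) := by
      simpa only [hzero] using hT
    exact (tendsto_nhds_unique this tendsto_const_nhds)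
  rw [← integral_inner hrint v]
  exact key

end
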